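/- Let H_{x1}, H_{z1}, H_{x2}, H_{z2} be CSS parity-check matrices as in the 4D XYZ product. Suppose r ∈ ker(vertcat(H_{x1},H_{z1})) ⊗ Im([H_{x2}ᵀ, H_{z2}ᵀ]) ⊆ F_2^{nA·nB}. Then there exist t ∈ ker(vertcat(H_{x1},H_{z1})) ⊗ F_2^{m4} and u ∈ ker(vertcat(H_{x1},H_{z1})) ⊗ F_2^{m3} such that r = (I_{nA}⊗H_{x2}ᵀ)t + (I_{nA}⊗H_{z2}ᵀ)u, and moreover (H_{z1}⊗I_{m4})t = (H_{x1}⊗I_{m4})t = 0 and (H_{z1}⊗I_{m3})u = (H_{x1}⊗I_{m3})u = 0. -/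

import Mathlib

open Matrix Kronecker

abbrev F2 := ZMod 2

def hcat {I J1 J2 : Type*} (A : Matrix I J1 F2) (B : Matrix I J2 F2) :
    Matrix I (J1 ⊕ J2) F2 := fun i => Sum.elim (A i) (B i)

def vcat {I1 I2 J : Type*} (A : Matrix I1 J F2) (B : Matrix I2 J F2) :
    Matrix (I1 ⊕ I2) J F2 := Sum.elim A B

/-- Kronecker (tensor) product of two vectors over `F_2`. -/
def kronV {I J : Type*} (x : I → F2) (y : J → F2) : I × J → F2 :=
  fun p => x p.1 * y p.2

/-- Lemma from the proof of Theorem 2: if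
`r ∈ ker(vertcat(H_{x1},H_{z1})) ⊗ Im([H_{x2}ᵀ, H_{z2}ᵀ]) ⊆ F_2^{nA·nB}`, then
there are `t ∈ ker(vertcat(H_{x1},H_{z1})) ⊗ F_2^{m4}` and
`u ∈ ker(vertcat(H_{x1},H_{z1})) ⊗ F_2^{m3}` with
`r = (I_{nA}⊗H_{z2}ᵀ)t + (I_{nA}⊗H_{x2}ᵀ)u`; i.e. such an X-type operator on
the middle qubit block is a product of `T`- and `U`-type stabilizer
generators. -/

lemma mulVec_kronV {a b c d : Type*} [Fintype b] [Fintype d] [DecidableEq b] [DecidableEq d]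
    (A : Matrix a b F2) (B : Matrix c d F2) (x : b → F2) (y : d → F2) :
    (A ⊗ₖ B).mulVec (kronV x y) = kronV (A.mulVec x) (B.mulVec y) := by
  ext ⟨i, j⟩
  simp only [Matrix.mulVec, dotProduct, kronV, Matrix.kroneckerMap_apply,
    Fintype.sum_prod_type, Finset.sum_mul_sum]
  rw [Finset.sum_congr rfl]
  intro k _
  rw [Finset.sum_congr rfl]
  intro l _
  ring

theorem ker_tensor_im_is_stabilizer {m1 m2 m3 m4 nA nB : ℕ}
    (Hx1 : Matrix (Fin m1) (Fin nA) F2) (Hz1 : Matrix (Fin m2) (Fin nA) F2)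
    (Hx2 : Matrix (Fin m3) (Fin nB) F2) (Hz2 : Matrix (Fin m4) (Fin nB) F2)
    (hcss1 : Hx1 * Hz1ᵀ = 0) (hcss2 : Hx2 * Hz2ᵀ = 0)
    (r : Fin nA × Fin nB → F2)
    (hr : r ∈ Submodule.span F2
      {w : Fin nA × Fin nB → F2 | ∃ x ∈ LinearMap.ker ((vcat Hx1 Hz1).mulVecLin),
        ∃ y ∈ LinearMap.range ((hcat Hx2ᵀ Hz2ᵀ).mulVecLin), w = kronV x y}) :
    ∃ (t : Fin nA × Fin m4 → F2) (u : Fin nA × Fin m3 → F2),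
      r = ((1 : Matrix (Fin nA) (Fin nA) F2) ⊗ₖ Hz2ᵀ).mulVec t +
          ((1 : Matrix (Fin nA) (Fin nA) F2) ⊗ₖ Hx2ᵀ).mulVec u ∧
      (Hx1 ⊗ₖ (1 : Matrix (Fin m4) (Fin m4) F2)).mulVec t = 0 ∧
      (Hz1 ⊗ₖ (1 : Matrix (Fin m4) (Fin m4) F2)).mulVec t = 0 ∧
      (Hx1 ⊗ₖ (1 : Matrix (Fin m3) (Fin m3) F2)).mulVec u = 0 ∧
      (Hz1 ⊗ₖ (1 : Matrix (Fin m3) (Fin m3) F2)).mulVec u = 0 := by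
  let A := ((1 : Matrix (Fin nA) (Fin nA) F2) ⊗ₖ Hz2ᵀ)
  let B := ((1 : Matrix (Fin nA) (Fin nA) F2) ⊗ₖ Hx2ᵀ)
  let M : (Fin nA × Fin m4 → F2) × (Fin nA × Fin m3 → F2) →ₗ[F2] (Fin nA × Fin nB → F2) :=
    A.mulVecLin.comp (LinearMap.fst _ _ _) + B.mulVecLin.comp (LinearMap.snd _ _ _)
  let K : Submodule F2 ((Fin nA × Fin m4 → F2) × (Fin nA × Fin m3 → F2)) :=
    (LinearMap.ker (Hx1 ⊗ₖ (1 : Matrix (Fin m4) (Fin m4) F2)).mulVecLin ⊓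
     LinearMap.ker (Hz1 ⊗ₖ (1 : Matrix (Fin m4) (Fin m4) F2)).mulVecLin).prod
    (LinearMap.ker (Hx1 ⊗ₖ (1 : Matrix (Fin m3) (Fin m3) F2)).mulVecLin ⊓
     LinearMap.ker (Hz1 ⊗ₖ (1 : Matrix (Fin m3) (Fin m3) F2)).mulVecLin)
  have hrS : r ∈ K.map M := by
    refine Submodule.span_le.mpr ?_ hr
    rintro w ⟨x, hx, y, ⟨z, rfl⟩, rfl⟩
    have hx1 : Hx1.mulVec x = 0 := by
      funext i
      have := congrFun (LinearMap.mem_ker.mp hx) (Sum.inl i)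
      exact this
    have hx2 : Hz1.mulVec x = 0 := by
      funext i
      have := congrFun (LinearMap.mem_ker.mp hx) (Sum.inr i)
      exact this
    refine ⟨(kronV x (fun j => z (Sum.inr j)), kronV x (fun j => z (Sum.inl j))), ?_, ?_⟩
    · refine ⟨⟨?_, ?_⟩, ?_, ?_⟩ <;>
      · simp only [SetLike.mem_coe, LinearMap.mem_ker, Matrix.mulVecLin_apply, mulVec_kronV, hx1, hx2]
        funext p
        simp [kronV]
    · simp only [M, A, B, LinearMap.add_apply, LinearMap.coe_comp, Function.comp_apply,
        LinearMap.fst_apply, LinearMap.snd_apply, Matrix.mulVecLin_apply,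
        mulVec_kronV, Matrix.one_mulVec]
      have hy : (hcat Hx2ᵀ Hz2ᵀ).mulVec z =
          Hx2ᵀ.mulVec (fun j => z (Sum.inl j)) + Hz2ᵀ.mulVec (fun j => z (Sum.inr j)) := by
        funext i
        simp [hcat, Matrix.mulVec, dotProduct, Fintype.sum_sum_type]
      rw [hy]
      funext p
      simp [kronV, mul_add]
      ring
  obtain ⟨⟨t, u⟩, ⟨⟨ht1, ht2⟩, hu1, hu2⟩, hMr⟩ := hrS
  exact ⟨t, u, hMr.symm, ht1, ht2, hu1, hu2⟩
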